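/- Fix μ ∈ {+1,−1}, v ∈ ℝ³, x ∈ ℝ³. Let m : ℝ³ → ℂ be continuous with compact support contained in ℝ³∖{0}, let χ : ℝ → ℝ be continuously differentiable with χ(r) = 0 for r ≤ 1, and let G : (0,∞) × ℝ³ → ℂ be continuous, continuously differentiable in t, with G and ∂_t G bounded on compact subsets. For t > 0 define Φ(t,ξ) := (x + t v̂)·ξ − t μ |ξ|, T(t) := ∫_{ℝ³} e^{iΦ(t,ξ)} · ( −i m(ξ) / ( v̂·ξ − μ|ξ| ) ) · G(t,ξ) · χ( t(|ξ| − μ v̂·ξ) ) dξ, H(t) := ∫_{ℝ³} e^{iΦ(t,ξ)} · ( i m(ξ) / ( v̂·ξ − μ|ξ| ) ) · ∂_t G(t,ξ) · χ( t(|ξ| − μ v̂·ξ) ) dξ, and K(t) := ∫_{ℝ³} e^{iΦ(t,ξ)} · m(ξ) · G(t,ξ) · [ −iμ·χ′( t(|ξ| − μ v̂·ξ) ) + ( 1 − χ( t(|ξ| − μ v̂·ξ) ) ) ] dξ (the denominators are nonzero on the support of the integrands). Then T is differentiable on (0,∞) and for every t > 0: T′(t) + H(t) + K(t) = ∫_{ℝ³}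 e^{iΦ(t,ξ)} m(ξ) G(t,ξ) dξ. -/

import Mathlib

open MeasureTheory
open scoped RealInnerProductSpace

noncomputable section

abbrev E3 : Type := EuclideanSpace ℝ (Fin 3)

/-- The relativistic velocity `v̂ = v / √(1+|v|²)`. -/
def vhat (v : E3) : E3 := (Real.sqrt (1 + ‖v‖ ^ 2))⁻¹ • v

/-- The oscillating phase `e^{iΦ(t,ξ)}`, `Φ(t,ξ) = (x + t v̂)·ξ - t μ |ξ|`. -/
def phase14 (μ : ℝ) (x v : E3) (t : ℝ) (ξ : E3) : ℂ :=
  Complex.exp (Complex.I * ((⟪x + t • vhat v, ξ⟫ - t * μ * ‖ξ‖ : ℝ) : ℂ))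

/-- The operator `T(t)` (the time-antiderivative part of the good derivative). -/
def Tdef (μ : ℝ) (x v : E3) (m : E3 → ℂ) (χ : ℝ → ℝ) (G : ℝ → E3 → ℂ) (t : ℝ) : ℂ :=
  ∫ ξ : E3, phase14 μ x v t ξ *
    (-Complex.I * m ξ / ((⟪vhat v, ξ⟫ - μ * ‖ξ‖ : ℝ) : ℂ)) * G t ξ *
    ((χ (t * (‖ξ‖ - μ * ⟪vhat v, ξ⟫)) : ℝ) : ℂ)

/-- The error operator `H(t)` in which the time derivative falls on the profile `G`. -/
def Hdef (μ : ℝ) (x v : E3) (m : E3 → ℂ) (χ : ℝ → ℝ) (G' : ℝ → E3 → ℂ) (t : ℝ) : ℂ :=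
  ∫ ξ : E3, phase14 μ x v t ξ *
    (Complex.I * m ξ / ((⟪vhat v, ξ⟫ - μ * ‖ξ‖ : ℝ) : ℂ)) * G' t ξ *
    ((χ (t * (‖ξ‖ - μ * ⟪vhat v, ξ⟫)) : ℝ) : ℂ)

/-- The error operator `K(t)` collecting the cutoff terms. -/
def Kdef (μ : ℝ) (x v : E3) (m : E3 → ℂ) (χ : ℝ → ℝ) (G : ℝ → E3 → ℂ) (t : ℝ) : ℂ :=
  ∫ ξ : E3, phase14 μ x v t ξ * m ξ * G t ξ *
    (-Complex.I * (μ : ℂ) * ((deriv χ (t * (‖ξ‖ - μ * ⟪vhat v, ξ⟫)) : ℝ) : ℂ) +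
      ((1 - χ (t * (‖ξ‖ - μ * ⟪vhat v, ξ⟫)) : ℝ) : ℂ))

/-- The integrand of `T`. -/
def Fint (μ : ℝ) (x v : E3) (m : E3 → ℂ) (χ : ℝ → ℝ) (G : ℝ → E3 → ℂ) (s : ℝ) (ξ : E3) : ℂ :=
  phase14 μ x v s ξ *
    (-Complex.I * m ξ / ((⟪vhat v, ξ⟫ - μ * ‖ξ‖ : ℝ) : ℂ)) * G s ξ *
    ((χ (s * (‖ξ‖ - μ * ⟪vhat v, ξ⟫)) : ℝ) : ℂ)

/-- The time derivative of the integrand of `T`. -/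
def Fint' (μ : ℝ) (x v : E3) (m : E3 → ℂ) (χ : ℝ → ℝ) (G G' : ℝ → E3 → ℂ) (s : ℝ) (ξ : E3) : ℂ :=
  phase14 μ x v s ξ *
    (m ξ * G s ξ * ((χ (s * (‖ξ‖ - μ * ⟪vhat v, ξ⟫)) : ℝ) : ℂ)
      + (-Complex.I * m ξ / ((⟪vhat v, ξ⟫ - μ * ‖ξ‖ : ℝ) : ℂ)) * G' s ξ *
          ((χ (s * (‖ξ‖ - μ * ⟪vhat v, ξ⟫)) : ℝ) : ℂ)
      + Complex.I * (μ : ℂ) * m ξ * G s ξ *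
          ((deriv χ (s * (‖ξ‖ - μ * ⟪vhat v, ξ⟫)) : ℝ) : ℂ))

lemma phase14_norm (μ : ℝ) (x v : E3) (t : ℝ) (ξ : E3) : ‖phase14 μ x v t ξ‖ = 1 := by
  rw [phase14, mul_comm, Complex.norm_exp_ofReal_mul_I]

lemma phase14_cont (μ : ℝ) (x v : E3) (s : ℝ) : Continuous fun ξ : E3 => phase14 μ x v s ξ := by
  refine Complex.continuous_exp.comp (continuous_const.mul ?_)
  exact Complex.continuous_ofReal.comp
    ((continuous_const.inner continuous_id).sub (continuous_const.mul continuous_norm))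

/-- An a.e.-strongly measurable function supported in a compact set and bounded there is
integrable. -/
lemma integrable_of_compact_bound (K : Set E3) (hK : IsCompact K) (f : E3 → ℂ)
    (hf : AEStronglyMeasurable f volume) (C : ℝ)
    (h1 : ∀ ξ ∈ K, ‖f ξ‖ ≤ C) (h0 : ∀ ξ ∉ K, f ξ = 0) : Integrable f := by
  refine Integrable.mono' (g := K.indicator fun _ => C)
    ((integrable_indicator_iff hK.measurableSet).2
      (integrableOn_const hK.measure_lt_top.ne)) hf
    (Filter.Eventually.of_forall fun ξ => ?_)
  by_cases h : ξ ∈ K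
  · simpa [Set.indicator_of_mem h] using h1 ξ h
  · simp [Set.indicator_of_notMem h, h0 ξ h]

lemma mul_le_mul3 {a b c A B C : ℝ} (h1 : a ≤ A) (h2 : b ≤ B) (h3 : c ≤ C)
    (ha : 0 ≤ a) (hb : 0 ≤ b) (hc : 0 ≤ c) : a * b * c ≤ A * B * C :=
  mul_le_mul (mul_le_mul h1 h2 hb (ha.trans h1)) h3 hc
    (mul_nonneg (ha.trans h1) (hb.trans h2))

set_option maxHeartbeats 2000000 in
/-- Integration by parts in time: the good derivative of a half-wave decomposes as the time
derivative of a bilinear operator plus lower order errors, `T' + H + K = ∫ e^{iΦ} m G`. -/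
theorem stmt14 (μ : ℝ) (hμ : μ = 1 ∨ μ = -1) (v x : E3)
    (m : E3 → ℂ) (hmc : Continuous m) (hms : HasCompactSupport m)
    (hm0 : (0 : E3) ∉ tsupport m)
    (χ : ℝ → ℝ) (hχ : ContDiff ℝ 1 χ) (hχ0 : ∀ r : ℝ, r ≤ 1 → χ r = 0)
    (G G' : ℝ → E3 → ℂ)
    (hG : ContinuousOn (fun p : ℝ × E3 => G p.1 p.2) (Set.Ioi 0 ×ˢ (Set.univ : Set E3)))
    (hG' : ContinuousOn (fun p : ℝ × E3 => G' p.1 p.2) (Set.Ioi 0 ×ˢ (Set.univ : Set E3)))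
    (hder : ∀ ξ : E3, ∀ t : ℝ, 0 < t → HasDerivAt (fun s => G s ξ) (G' t ξ) t) :
    ∀ t : ℝ, 0 < t →
      DifferentiableAt ℝ (Tdef μ x v m χ G) t ∧
        deriv (Tdef μ x v m χ G) t + Hdef μ x v m χ G' t + Kdef μ x v m χ G t =
          ∫ ξ : E3, phase14 μ x v t ξ * m ξ * G t ξ := by
  -- basic facts independent of `t`
  have hμ2 : μ * μ = 1 := by rcases hμ with h | h <;> rw [h] <;> norm_num
  have hμn : |μ| = 1 := by rcases hμ with h | h <;> rw [h] <;> norm_num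
  obtain ⟨M, hM⟩ := hms.exists_bound_of_continuous hmc
  have hM0 : 0 ≤ M := le_trans (norm_nonneg _) (hM 0)
  obtain ⟨R₀, hR₀⟩ := (IsCompact.isBounded hms).subset_closedBall 0
  set R : ℝ := max R₀ 1 with hRdef
  have hR1 : (1:ℝ) ≤ R := le_max_right _ _
  have hR0 : (0:ℝ) ≤ R := le_trans zero_le_one hR1
  have hKR : tsupport m ⊆ Metric.closedBall 0 R :=
    hR₀.trans (Metric.closedBall_subset_closedBall (le_max_left _ _))
  have hχc : Continuous χ := hχ.continuous
  have hχdc : Continuous (deriv χ) := hχ.continuous_deriv le_rfl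
  have hχ00 : χ 0 = 0 := hχ0 0 zero_le_one
  have hχd0 : deriv χ 0 = 0 := by
    have h0 : χ =ᶠ[nhds (0:ℝ)] fun _ => (0:ℝ) :=
      Filter.eventuallyEq_of_mem (Iio_mem_nhds one_pos) fun r hr => hχ0 r (le_of_lt hr)
    rw [h0.deriv_eq]; simp
  have hA_eq : ∀ ξ : E3, ‖ξ‖ - μ * ⟪vhat v, ξ⟫ = -μ * (⟪vhat v, ξ⟫ - μ * ‖ξ‖) := by
    intro ξ; linear_combination (-‖ξ‖) * hμ2
  have hAbs : ∀ ξ : E3, |‖ξ‖ - μ * ⟪vhat v, ξ⟫| ≤ (1 + ‖vhat v‖) * ‖ξ‖ := by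
    intro ξ
    have h1 : |⟪vhat v, ξ⟫| ≤ ‖vhat v‖ * ‖ξ‖ := abs_real_inner_le_norm _ _
    have h2 : |μ * ⟪vhat v, ξ⟫| ≤ ‖vhat v‖ * ‖ξ‖ := by
      rw [abs_mul, hμn, one_mul]; exact h1
    have h3 : |‖ξ‖ - μ * ⟪vhat v, ξ⟫| ≤ |‖ξ‖| + |μ * ⟪vhat v, ξ⟫| := abs_sub _ _
    rw [abs_norm] at h3
    nlinarith
  -- continuity and measurability in ξ
  have hDc : Continuous fun ξ : E3 => (⟪vhat v, ξ⟫ - μ * ‖ξ‖ : ℝ) :=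
    (continuous_const.inner continuous_id).sub (continuous_const.mul continuous_norm)
  have hAc : Continuous fun ξ : E3 => (‖ξ‖ - μ * ⟪vhat v, ξ⟫ : ℝ) :=
    continuous_norm.sub (continuous_const.mul (continuous_const.inner continuous_id))
  have hGc : ∀ s : ℝ, 0 < s → Continuous fun ξ : E3 => G s ξ := by
    intro s hs
    exact hG.comp_continuous (continuous_const.prodMk continuous_id) fun ξ => ⟨hs, trivial⟩
  have hG'c : ∀ s : ℝ, 0 < s → Continuous fun ξ : E3 => G' s ξ := by
    intro s hs
    exact hG'.comp_continuous (continuous_const.prodMk continuous_id) fun ξ => ⟨hs, trivial⟩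
  have mc : Measurable fun ξ : E3 =>
      -Complex.I * m ξ / ((⟪vhat v, ξ⟫ - μ * ‖ξ‖ : ℝ) : ℂ) :=
    (measurable_const.mul hmc.measurable).div (Complex.measurable_ofReal.comp hDc.measurable)
  have mc' : Measurable fun ξ : E3 =>
      Complex.I * m ξ / ((⟪vhat v, ξ⟫ - μ * ‖ξ‖ : ℝ) : ℂ) :=
    (measurable_const.mul hmc.measurable).div (Complex.measurable_ofReal.comp hDc.measurable)
  have mχ : ∀ s : ℝ, Measurable fun ξ : E3 =>
      ((χ (s * (‖ξ‖ - μ * ⟪vhat v, ξ⟫)) : ℝ) : ℂ) := fun s =>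
    Complex.measurable_ofReal.comp
      (hχc.measurable.comp (measurable_const.mul hAc.measurable))
  have mχ' : ∀ s : ℝ, Measurable fun ξ : E3 =>
      ((deriv χ (s * (‖ξ‖ - μ * ⟪vhat v, ξ⟫)) : ℝ) : ℂ) := fun s =>
    Complex.measurable_ofReal.comp
      (hχdc.measurable.comp (measurable_const.mul hAc.measurable))
  have hmeasF : ∀ s : ℝ, 0 < s →
      AEStronglyMeasurable (fun ξ => Fint μ x v m χ G s ξ) volume := by
    intro s hs
    exact ((((phase14_cont μ x v s).measurable.mul mc).mul (hGc s hs).measurable).mul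
      (mχ s)).aestronglyMeasurable
  have hmeasF' : ∀ s : ℝ, 0 < s →
      AEStronglyMeasurable (fun ξ => Fint' μ x v m χ G G' s ξ) volume := by
    intro s hs
    refine ((phase14_cont μ x v s).measurable.mul ?_).aestronglyMeasurable
    exact (((hmc.measurable.mul (hGc s hs).measurable).mul (mχ s)).add
        ((mc.mul (hG'c s hs).measurable).mul (mχ s))).add
      ((((measurable_const.mul hmc.measurable).mul (hGc s hs).measurable)).mul (mχ' s))
  intro t ht
  have ht2 : (0:ℝ) < t / 2 := by positivity
  have h2t0 : (0:ℝ) ≤ 2*t := by linarith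
  have hball : ∀ s ∈ Metric.ball t (t/2), t/2 < s ∧ s < 2*t := by
    intro s hs
    rw [Metric.mem_ball, Real.dist_eq, abs_lt] at hs
    constructor <;> linarith [hs.1, hs.2]
  -- bounds on G, G', χ, deriv χ on the relevant compacts
  have hScomp : IsCompact ((Set.Icc (t/2) (2*t)) ×ˢ Metric.closedBall (0:E3) R) :=
    isCompact_Icc.prod (isCompact_closedBall _ _)
  have hSsub : ((Set.Icc (t/2) (2*t)) ×ˢ Metric.closedBall (0:E3) R) ⊆
      Set.Ioi 0 ×ˢ (Set.univ : Set E3) := fun p hp => ⟨lt_of_lt_of_le ht2 hp.1.1, trivial⟩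
  obtain ⟨Cg, hCg⟩ := hScomp.exists_bound_of_continuousOn (hG.mono hSsub)
  obtain ⟨Cg', hCg'⟩ := hScomp.exists_bound_of_continuousOn (hG'.mono hSsub)
  have htmem : (t, (0:E3)) ∈ (Set.Icc (t/2) (2*t)) ×ˢ Metric.closedBall (0:E3) R :=
    ⟨⟨by linarith, by linarith⟩, by simpa using hR0⟩
  have hCg0 : 0 ≤ Cg := le_trans (norm_nonneg _) (hCg _ htmem)
  have hCg'0 : 0 ≤ Cg' := le_trans (norm_nonneg _) (hCg' _ htmem)
  set B : ℝ := 2*t*((1 + ‖vhat v‖) * R) with hBdef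
  have hB0 : (0:ℝ) ≤ B := by positivity
  obtain ⟨Cχ, hCχ⟩ := (isCompact_Icc (a := -B) (b := B)).exists_bound_of_continuousOn
    hχc.continuousOn
  obtain ⟨Cχ', hCχ'⟩ := (isCompact_Icc (a := -B) (b := B)).exists_bound_of_continuousOn
    hχdc.continuousOn
  have h0mem : (0:ℝ) ∈ Set.Icc (-B) B := ⟨by linarith, hB0⟩
  have hCχ0 : 0 ≤ Cχ := le_trans (norm_nonneg _) (hCχ _ h0mem)
  have hCχ'0 : 0 ≤ Cχ' := le_trans (norm_nonneg _) (hCχ' _ h0mem)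
  -- the χ-argument stays in [-B, B]
  have harg : ∀ s : ℝ, t/2 ≤ s → s ≤ 2*t → ∀ ξ ∈ Metric.closedBall (0:E3) R,
      s * (‖ξ‖ - μ * ⟪vhat v, ξ⟫) ∈ Set.Icc (-B) B := by
    intro s hs1 hs2 ξ hξ
    have hξR : ‖ξ‖ ≤ R := by simpa using hξ
    have h1 : |s| ≤ 2*t := abs_le.2 ⟨by linarith, hs2⟩
    have h2 : |‖ξ‖ - μ * ⟪vhat v, ξ⟫| ≤ (1 + ‖vhat v‖) * R :=
      (hAbs ξ).trans (by nlinarith [norm_nonneg (vhat v)])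
    have h3 : |s * (‖ξ‖ - μ * ⟪vhat v, ξ⟫)| ≤ B := by
      rw [abs_mul, hBdef]
      exact mul_le_mul h1 h2 (abs_nonneg _) (by linarith)
    exact abs_le.1 h3
  -- bound for the quotient when the cutoff is nonvanishing
  have hquot : ∀ s : ℝ, 0 < s → s ≤ 2*t → ∀ ξ : E3,
      χ (s * (‖ξ‖ - μ * ⟪vhat v, ξ⟫)) ≠ 0 →
      ‖-Complex.I * m ξ / ((⟪vhat v, ξ⟫ - μ * ‖ξ‖ : ℝ) : ℂ)‖ ≤ 2*t*M := by
    intro s hs hs2 ξ hne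
    have h1 : 1 < s * (‖ξ‖ - μ * ⟪vhat v, ξ⟫) := by
      by_contra h
      exact hne (hχ0 _ (le_of_not_gt h))
    have hApos : 0 < ‖ξ‖ - μ * ⟪vhat v, ξ⟫ := by nlinarith
    have habs : |⟪vhat v, ξ⟫ - μ * ‖ξ‖| = ‖ξ‖ - μ * ⟪vhat v, ξ⟫ := by
      have e : |⟪vhat v, ξ⟫ - μ * ‖ξ‖| = |‖ξ‖ - μ * ⟪vhat v, ξ⟫| := by
        rw [hA_eq ξ, abs_mul, abs_neg, hμn, one_mul]
      rw [e]
      exact abs_of_pos hApos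
    have hD1 : 1 ≤ 2*t * |⟪vhat v, ξ⟫ - μ * ‖ξ‖| := by
      rw [habs]; nlinarith
    have hDpos : (0:ℝ) < |⟪vhat v, ξ⟫ - μ * ‖ξ‖| := by
      rw [habs]; exact hApos
    rw [norm_div, norm_mul, norm_neg, Complex.norm_I, one_mul, Complex.norm_real,
      Real.norm_eq_abs, div_le_iff₀ hDpos]
    nlinarith [hM ξ, abs_nonneg (⟪vhat v, ξ⟫ - μ * ‖ξ‖)]
  -- the pointwise derivative
  have h_diff : ∀ ξ : E3, ∀ s ∈ Metric.ball t (t/2),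
      HasDerivAt (fun r => Fint μ x v m χ G r ξ) (Fint' μ x v m χ G G' s ξ) s := by
    intro ξ s hs
    obtain ⟨hs1, hs2⟩ := hball s hs
    have hspos : 0 < s := lt_trans ht2 hs1
    by_cases hd0 : (⟪vhat v, ξ⟫ - μ * ‖ξ‖ : ℝ) = 0
    · have hA0 : (‖ξ‖ - μ * ⟪vhat v, ξ⟫ : ℝ) = 0 := by rw [hA_eq ξ, hd0]; ring
      have hFz : (fun r => Fint μ x v m χ G r ξ) = fun _ => (0:ℂ) := by
        funext r
        simp only [Fint, hd0, Complex.ofReal_zero, div_zero, mul_zero, zero_mul]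
      have hF'z : Fint' μ x v m χ G G' s ξ = 0 := by
        simp only [Fint', hA0, hd0, mul_zero, hχ00, hχd0, Complex.ofReal_zero, div_zero,
          zero_mul, mul_zero, add_zero, zero_add]
      rw [hFz, hF'z]
      exact hasDerivAt_const s 0
    · simp only [Fint, Fint']
      set d : ℝ := ⟪vhat v, ξ⟫ - μ * ‖ξ‖ with hd
      set A : ℝ := ‖ξ‖ - μ * ⟪vhat v, ξ⟫ with hA
      have hAd : A = -μ * d := hA_eq ξ
      have hdC : ((d:ℝ):ℂ) ≠ 0 := Complex.ofReal_ne_zero.2 hd0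
      have key : ∀ r : ℝ, (⟪x + r • vhat v, ξ⟫ - r * μ * ‖ξ‖ : ℝ) = ⟪x, ξ⟫ + r * d := by
        intro r
        rw [inner_add_left, real_inner_smul_left, hd]; ring
      have hph : HasDerivAt (fun r => phase14 μ x v r ξ)
          (Complex.I * (d:ℂ) * phase14 μ x v s ξ) s := by
        have h1 : HasDerivAt (fun r : ℝ => (⟪x, ξ⟫ : ℝ) + r * d) d s := by
          simpa using ((hasDerivAt_id s).mul_const d).const_add (⟪x, ξ⟫ : ℝ)
        have h3 := ((h1.ofReal_comp).const_mul Complex.I).cexp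
        have hfun : (fun r : ℝ => phase14 μ x v r ξ) =
            fun r => Complex.exp (Complex.I * (((⟪x, ξ⟫ : ℝ) + r * d : ℝ) : ℂ)) := by
          funext r; rw [phase14, key r]
        have hval : phase14 μ x v s ξ =
            Complex.exp (Complex.I * (((⟪x, ξ⟫ : ℝ) + s * d : ℝ) : ℂ)) := by
          rw [phase14, key s]
        rw [hfun, hval]
        convert h3 using 1
        push_cast
        ring
      have hχs : HasDerivAt (fun r : ℝ => ((χ (r * A) : ℝ) : ℂ))
          ((deriv χ (s * A) * A : ℝ) : ℂ) s := by
        have h1 : HasDerivAt (fun r : ℝ => r * A) A s := by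
          simpa using (hasDerivAt_id s).mul_const A
        have h2 : HasDerivAt χ (deriv χ (s * A)) (s * A) :=
          ((hχ.differentiable one_ne_zero) (s * A)).hasDerivAt
        exact (h2.comp s h1).ofReal_comp
      have hGd := hder ξ s hspos
      have hc := ((hph.mul_const (-Complex.I * m ξ / ((d:ℝ):ℂ))).mul hGd).mul hχs
      refine hc.congr_deriv ?_
      symm
      simp only [Pi.mul_apply]
      rw [hAd]
      push_cast
      field_simp
      ring_nf
      simp only [Complex.I_sq]
      ring
  -- the uniform bound for the derivative
  set C : ℝ := M*Cg*Cχ + 2*t*M*Cg'*Cχ + M*Cg*Cχ' with hCdef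
  have h_bound : ∀ ξ : E3, ∀ s ∈ Metric.ball t (t/2),
      ‖Fint' μ x v m χ G G' s ξ‖ ≤ (tsupport m).indicator (fun _ => C) ξ := by
    intro ξ s hs
    obtain ⟨hs1, hs2⟩ := hball s hs
    have hspos : 0 < s := lt_trans ht2 hs1
    by_cases hK : ξ ∈ tsupport m
    · rw [Set.indicator_of_mem hK]
      have hξR : ξ ∈ Metric.closedBall (0:E3) R := hKR hK
      have hsmem : (s, ξ) ∈ (Set.Icc (t/2) (2*t)) ×ˢ Metric.closedBall (0:E3) R :=
        ⟨⟨le_of_lt hs1, by linarith⟩, hξR⟩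
      have hargmem := harg s (le_of_lt hs1) (by linarith) ξ hξR
      have hb1 : ‖m ξ * G s ξ * ((χ (s * (‖ξ‖ - μ * ⟪vhat v, ξ⟫)) : ℝ) : ℂ)‖ ≤
          M*Cg*Cχ := by
        rw [norm_mul, norm_mul, Complex.norm_real]
        exact mul_le_mul3 (hM ξ) (hCg _ hsmem) (hCχ _ hargmem)
          (norm_nonneg _) (norm_nonneg _) (norm_nonneg _)
      have hb2 : ‖(-Complex.I * m ξ / ((⟪vhat v, ξ⟫ - μ * ‖ξ‖ : ℝ) : ℂ)) * G' s ξ *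
          ((χ (s * (‖ξ‖ - μ * ⟪vhat v, ξ⟫)) : ℝ) : ℂ)‖ ≤ 2*t*M*Cg'*Cχ := by
        by_cases hz : χ (s * (‖ξ‖ - μ * ⟪vhat v, ξ⟫)) = 0
        · rw [hz]
          simp only [Complex.ofReal_zero, mul_zero, norm_zero]
          have h1 : (0:ℝ) ≤ 2*t*M*Cg'*Cχ :=
            mul_nonneg (mul_nonneg (mul_nonneg h2t0 hM0) hCg'0) hCχ0
          linarith
        · rw [norm_mul, norm_mul, Complex.norm_real]
          have hq := hquot s hspos (by linarith) ξ hz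
          have := mul_le_mul3 hq (hCg' _ hsmem) (hCχ _ hargmem)
            (norm_nonneg _) (norm_nonneg _) (norm_nonneg _)
          calc ‖-Complex.I * m ξ / ((⟪vhat v, ξ⟫ - μ * ‖ξ‖ : ℝ) : ℂ)‖ * ‖G' s ξ‖ *
                ‖χ (s * (‖ξ‖ - μ * ⟪vhat v, ξ⟫))‖ ≤ 2*t*M * Cg' * Cχ := this
            _ = 2*t*M*Cg'*Cχ := by ring
      have hb3 : ‖Complex.I * (μ:ℂ) * m ξ * G s ξ *
          ((deriv χ (s * (‖ξ‖ - μ * ⟪vhat v, ξ⟫)) : ℝ) : ℂ)‖ ≤ M*Cg*Cχ' := by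
        rw [norm_mul, norm_mul, norm_mul, norm_mul, Complex.norm_I, Complex.norm_real,
          Complex.norm_real, Real.norm_eq_abs μ, hμn, one_mul, one_mul]
        exact mul_le_mul3 (hM ξ) (hCg _ hsmem) (hCχ' _ hargmem)
          (norm_nonneg _) (norm_nonneg _) (norm_nonneg _)
      calc ‖Fint' μ x v m χ G G' s ξ‖
          = ‖m ξ * G s ξ * ((χ (s * (‖ξ‖ - μ * ⟪vhat v, ξ⟫)) : ℝ) : ℂ)
              + (-Complex.I * m ξ / ((⟪vhat v, ξ⟫ - μ * ‖ξ‖ : ℝ) : ℂ)) * G' s ξ *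
                  ((χ (s * (‖ξ‖ - μ * ⟪vhat v, ξ⟫)) : ℝ) : ℂ)
              + Complex.I * (μ : ℂ) * m ξ * G s ξ *
                  ((deriv χ (s * (‖ξ‖ - μ * ⟪vhat v, ξ⟫)) : ℝ) : ℂ)‖ := by
            simp only [Fint']
            rw [norm_mul, phase14_norm, one_mul]
        _ ≤ ‖m ξ * G s ξ * ((χ (s * (‖ξ‖ - μ * ⟪vhat v, ξ⟫)) : ℝ) : ℂ)
              + (-Complex.I * m ξ / ((⟪vhat v, ξ⟫ - μ * ‖ξ‖ : ℝ) : ℂ)) * G' s ξ *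
                  ((χ (s * (‖ξ‖ - μ * ⟪vhat v, ξ⟫)) : ℝ) : ℂ)‖
            + ‖Complex.I * (μ : ℂ) * m ξ * G s ξ *
                  ((deriv χ (s * (‖ξ‖ - μ * ⟪vhat v, ξ⟫)) : ℝ) : ℂ)‖ := norm_add_le _ _
        _ ≤ (‖m ξ * G s ξ * ((χ (s * (‖ξ‖ - μ * ⟪vhat v, ξ⟫)) : ℝ) : ℂ)‖
              + ‖(-Complex.I * m ξ / ((⟪vhat v, ξ⟫ - μ * ‖ξ‖ : ℝ) : ℂ)) * G' s ξ *
                  ((χ (s * (‖ξ‖ - μ * ⟪vhat v, ξ⟫)) : ℝ) : ℂ)‖)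
            + ‖Complex.I * (μ : ℂ) * m ξ * G s ξ *
                  ((deriv χ (s * (‖ξ‖ - μ * ⟪vhat v, ξ⟫)) : ℝ) : ℂ)‖ :=
            add_le_add (norm_add_le _ _) le_rfl
        _ ≤ C := by rw [hCdef]; exact add_le_add (add_le_add hb1 hb2) hb3
    · rw [Set.indicator_of_notMem hK]
      have hm0' : m ξ = 0 := image_eq_zero_of_notMem_tsupport hK
      simp [Fint', hm0']
  -- integrability of the various integrands
  have hFt_int : Integrable (fun ξ => Fint μ x v m χ G t ξ) := by
    refine integrable_of_compact_bound (tsupport m) hms (fun ξ => Fint μ x v m χ G t ξ)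
      (hmeasF t ht) (2*t*M*Cg*Cχ) ?_ ?_
    · intro ξ hK
      beta_reduce
      have hξR : ξ ∈ Metric.closedBall (0:E3) R := hKR hK
      have hsmem : (t, ξ) ∈ (Set.Icc (t/2) (2*t)) ×ˢ Metric.closedBall (0:E3) R :=
        ⟨⟨by linarith, by linarith⟩, hξR⟩
      have hargmem := harg t (by linarith) (by linarith) ξ hξR
      by_cases hz : χ (t * (‖ξ‖ - μ * ⟪vhat v, ξ⟫)) = 0
      · have hz' : Fint μ x v m χ G t ξ = 0 := by
          simp only [Fint, hz, Complex.ofReal_zero, mul_zero]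
        rw [hz', norm_zero]
        exact mul_nonneg (mul_nonneg (mul_nonneg h2t0 hM0) hCg0) hCχ0
      · have hn : ‖Fint μ x v m χ G t ξ‖ =
            ‖-Complex.I * m ξ / ((⟪vhat v, ξ⟫ - μ * ‖ξ‖ : ℝ) : ℂ)‖ * ‖G t ξ‖ *
              ‖χ (t * (‖ξ‖ - μ * ⟪vhat v, ξ⟫))‖ := by
          simp only [Fint]
          rw [norm_mul, norm_mul, norm_mul, phase14_norm, one_mul, Complex.norm_real]
        rw [hn]
        exact mul_le_mul3 (hquot t ht (by linarith) ξ hz) (hCg _ hsmem) (hCχ _ hargmem)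
          (norm_nonneg _) (norm_nonneg _) (norm_nonneg _)
    · intro ξ hK
      beta_reduce
      simp [Fint, image_eq_zero_of_notMem_tsupport hK]
  have hH_int : Integrable (fun ξ : E3 => phase14 μ x v t ξ *
      (Complex.I * m ξ / ((⟪vhat v, ξ⟫ - μ * ‖ξ‖ : ℝ) : ℂ)) * G' t ξ *
      ((χ (t * (‖ξ‖ - μ * ⟪vhat v, ξ⟫)) : ℝ) : ℂ)) := by
    refine integrable_of_compact_bound (tsupport m) hms _
      ((((phase14_cont μ x v t).measurable.mul mc').mul
        (hG'c t ht).measurable).mul (mχ t)).aestronglyMeasurable (2*t*M*Cg'*Cχ) ?_ ?_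
    · intro ξ hK
      beta_reduce
      have hξR : ξ ∈ Metric.closedBall (0:E3) R := hKR hK
      have hsmem : (t, ξ) ∈ (Set.Icc (t/2) (2*t)) ×ˢ Metric.closedBall (0:E3) R :=
        ⟨⟨by linarith, by linarith⟩, hξR⟩
      have hargmem := harg t (by linarith) (by linarith) ξ hξR
      by_cases hz : χ (t * (‖ξ‖ - μ * ⟪vhat v, ξ⟫)) = 0
      · rw [hz]
        simp only [Complex.ofReal_zero, mul_zero, norm_zero]
        exact mul_nonneg (mul_nonneg (mul_nonneg h2t0 hM0) hCg'0) hCχ0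
      · rw [norm_mul, norm_mul, norm_mul, phase14_norm, one_mul, Complex.norm_real]
        have hneg : Complex.I * m ξ / ((⟪vhat v, ξ⟫ - μ * ‖ξ‖ : ℝ) : ℂ) =
            -(-Complex.I * m ξ / ((⟪vhat v, ξ⟫ - μ * ‖ξ‖ : ℝ) : ℂ)) := by ring
        rw [hneg, norm_neg]
        exact mul_le_mul3 (hquot t ht (by linarith) ξ hz) (hCg' _ hsmem) (hCχ _ hargmem)
          (norm_nonneg _) (norm_nonneg _) (norm_nonneg _)
    · intro ξ hK
      beta_reduce
      simp [image_eq_zero_of_notMem_tsupport hK]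
  have hK_int : Integrable (fun ξ : E3 => phase14 μ x v t ξ * m ξ * G t ξ *
      (-Complex.I * (μ : ℂ) * ((deriv χ (t * (‖ξ‖ - μ * ⟪vhat v, ξ⟫)) : ℝ) : ℂ) +
        ((1 - χ (t * (‖ξ‖ - μ * ⟪vhat v, ξ⟫)) : ℝ) : ℂ))) := by
    refine integrable_of_compact_bound (tsupport m) hms _
      ((((phase14_cont μ x v t).measurable.mul hmc.measurable).mul
          (hGc t ht).measurable).mul
        ((measurable_const.mul (mχ' t)).add
          (Complex.measurable_ofReal.comp (measurable_const.sub
            (hχc.measurable.comp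
              (measurable_const.mul hAc.measurable)))))).aestronglyMeasurable
      (M*Cg*(Cχ' + (1 + Cχ))) ?_ ?_
    · intro ξ hK
      beta_reduce
      have hξR : ξ ∈ Metric.closedBall (0:E3) R := hKR hK
      have hsmem : (t, ξ) ∈ (Set.Icc (t/2) (2*t)) ×ˢ Metric.closedBall (0:E3) R :=
        ⟨⟨by linarith, by linarith⟩, hξR⟩
      have hargmem := harg t (by linarith) (by linarith) ξ hξR
      have hbr : ‖-Complex.I * (μ : ℂ) * ((deriv χ (t * (‖ξ‖ - μ * ⟪vhat v, ξ⟫)) : ℝ) : ℂ) +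
          ((1 - χ (t * (‖ξ‖ - μ * ⟪vhat v, ξ⟫)) : ℝ) : ℂ)‖ ≤ Cχ' + (1 + Cχ) := by
        refine (norm_add_le _ _).trans (add_le_add ?_ ?_)
        · rw [norm_mul, norm_mul, norm_neg, Complex.norm_I, one_mul, Complex.norm_real,
            Complex.norm_real, Real.norm_eq_abs μ, hμn, one_mul]
          exact hCχ' _ hargmem
        · rw [Complex.norm_real, Real.norm_eq_abs]
          have h1 := abs_sub (1:ℝ) (χ (t * (‖ξ‖ - μ * ⟪vhat v, ξ⟫)))
          have h2 := hCχ _ hargmem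
          rw [Real.norm_eq_abs] at h2
          simp only [abs_one] at h1
          linarith
      have hn : ‖phase14 μ x v t ξ * m ξ * G t ξ *
          (-Complex.I * (μ : ℂ) * ((deriv χ (t * (‖ξ‖ - μ * ⟪vhat v, ξ⟫)) : ℝ) : ℂ) +
            ((1 - χ (t * (‖ξ‖ - μ * ⟪vhat v, ξ⟫)) : ℝ) : ℂ))‖ =
          ‖m ξ‖ * ‖G t ξ‖ *
            ‖-Complex.I * (μ : ℂ) * ((deriv χ (t * (‖ξ‖ - μ * ⟪vhat v, ξ⟫)) : ℝ) : ℂ) +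
              ((1 - χ (t * (‖ξ‖ - μ * ⟪vhat v, ξ⟫)) : ℝ) : ℂ)‖ := by
        rw [norm_mul, norm_mul, norm_mul, phase14_norm, one_mul]
      rw [hn]
      exact mul_le_mul3 (hM ξ) (hCg _ hsmem) hbr
        (norm_nonneg _) (norm_nonneg _) (norm_nonneg _)
    · intro ξ hK
      beta_reduce
      simp [image_eq_zero_of_notMem_tsupport hK]
  -- differentiation under the integral sign
  have hFmeas_ev : ∀ᶠ s in nhds t, AEStronglyMeasurable (fun ξ => Fint μ x v m χ G s ξ)
      volume :=
    Filter.eventually_of_mem (Metric.ball_mem_nhds t ht2) fun s hs =>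
      hmeasF s (lt_trans ht2 (hball s hs).1)
  have hbound_int : Integrable ((tsupport m).indicator fun _ : E3 => C) :=
    (integrable_indicator_iff (IsCompact.measurableSet hms)).2
      (integrableOn_const (IsCompact.measure_lt_top hms).ne)
  have main := hasDerivAt_integral_of_dominated_loc_of_deriv_le (Metric.ball_mem_nhds t ht2) hFmeas_ev hFt_int
    (hmeasF' t ht) (Filter.Eventually.of_forall h_bound) hbound_int
    (Filter.Eventually.of_forall h_diff)
  have hT : HasDerivAt (Tdef μ x v m χ G) (∫ ξ : E3, Fint' μ x v m χ G G' t ξ) t := by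
    have hTeq : Tdef μ x v m χ G = fun s => ∫ ξ : E3, Fint μ x v m χ G s ξ := rfl
    rw [hTeq]
    exact main.2
  refine ⟨hT.differentiableAt, ?_⟩
  rw [hT.deriv]
  show (∫ ξ : E3, Fint' μ x v m χ G G' t ξ) + Hdef μ x v m χ G' t + Kdef μ x v m χ G t = _
  rw [Hdef, Kdef, ← integral_add main.1 hH_int]
  refine Eq.trans (integral_add (main.1.add hH_int) hK_int).symm ?_
  refine integral_congr_ae (Filter.Eventually.of_forall fun ξ => ?_)
  simp only [Pi.add_apply, Fint']
  push_cast
  ring
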